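/- Let (a_n), (b_n), (c_n), (δ_n) and (ξ_n) be sequences of real numbers such that (a_n), (b_n), (c_n), (ξ_n) are nonnegative, lim_{n→∞} a_n = 0, Σ_n b_n < ∞, Σ_n c_n = ∞, the series Σ_n δ_n converges, and there exists N₀ such that for all n ≥ N₀, ξ_{n+1} ≤ max(a_n, (1 + b_n)·ξ_n + δ_n − c_n). Then lim_{n→∞} ξ_n = 0. -/

import Mathlib

open Filter Topology

private lemma cauchy_ico (δ : ℕ → ℝ)
    (hδ : ∃ l : ℝ, Tendsto (fun N => ∑ k ∈ Finset.range N, δ k) atTop (𝓝 l)) :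
    ∀ ε > 0, ∃ N : ℕ, ∀ m n : ℕ, N ≤ m → m ≤ n → |∑ k ∈ Finset.Ico m n, δ k| ≤ ε := by
  obtain ⟨l, hl⟩ := hδ
  have hcs : CauchySeq (fun N => ∑ k ∈ Finset.range N, δ k) := hl.cauchySeq
  intro ε hε
  obtain ⟨N, hN⟩ := Metric.cauchySeq_iff.1 hcs ε hε
  refine ⟨N, fun m n hm hmn => ?_⟩
  rw [Finset.sum_Ico_eq_sub _ hmn]
  have := hN n (hm.trans hmn) m hm
  rw [Real.dist_eq] at this
  exact this.le

private lemma abel_cauchy (δ u : ℕ → ℝ) (hu0 : ∀ n, 0 ≤ u n) (hu1 : ∀ n, u n ≤ 1)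
    (hmono : ∀ n, u (n + 1) ≤ u n)
    (hδ : ∀ ε > 0, ∃ N : ℕ, ∀ m n : ℕ, N ≤ m → m ≤ n → |∑ k ∈ Finset.Ico m n, δ k| ≤ ε) :
    ∀ ε > 0, ∃ N : ℕ, ∀ m n : ℕ, N ≤ m → m ≤ n →
      |∑ k ∈ Finset.Ico m n, δ k * u k| ≤ ε := by
  intro ε hε
  obtain ⟨N, hN⟩ := hδ ε hε
  refine ⟨N, fun m n hm hmn => ?_⟩
  set S : ℕ → ℝ := fun j => ∑ k ∈ Finset.Ico m j, δ k with hS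
  -- Abel summation identity
  have key : ∀ n, m ≤ n → ∑ k ∈ Finset.Ico m n, δ k * u k
      = (∑ k ∈ Finset.Ico m n, S (k + 1) * (u k - u (k + 1))) + S n * u n := by
    intro n hn
    induction n, hn using Nat.le_induction with
    | base => simp [hS]
    | succ n hn ih =>
        rw [Finset.sum_Ico_succ_top hn, Finset.sum_Ico_succ_top hn, ih]
        have hSn : S (n + 1) = S n + δ n := by
          rw [hS]; simp [Finset.sum_Ico_succ_top hn]
        rw [hSn]; ring
  -- telescoping for u
  have tel : ∀ n, m ≤ n → ∑ k ∈ Finset.Ico m n, (u k - u (k + 1)) = u m - u n := by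
    intro n hn
    induction n, hn using Nat.le_induction with
    | base => simp
    | succ n hn ih => rw [Finset.sum_Ico_succ_top hn, ih]; ring
  have hSb : ∀ j, m ≤ j → j ≤ n → |S j| ≤ ε := fun j h1 h2 => hN m j hm h1
  rw [key n hmn]
  calc |(∑ k ∈ Finset.Ico m n, S (k + 1) * (u k - u (k + 1))) + S n * u n|
      ≤ |∑ k ∈ Finset.Ico m n, S (k + 1) * (u k - u (k + 1))| + |S n * u n| := abs_add_le _ _
    _ ≤ (∑ k ∈ Finset.Ico m n, ε * (u k - u (k + 1))) + ε * u n := by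
        gcongr
        · calc |∑ k ∈ Finset.Ico m n, S (k + 1) * (u k - u (k + 1))|
              ≤ ∑ k ∈ Finset.Ico m n, |S (k + 1) * (u k - u (k + 1))| :=
                Finset.abs_sum_le_sum_abs _ _
            _ ≤ ∑ k ∈ Finset.Ico m n, ε * (u k - u (k + 1)) := by
                refine Finset.sum_le_sum fun k hk => ?_
                rw [Finset.mem_Ico] at hk
                rw [abs_mul, abs_of_nonneg (sub_nonneg.2 (hmono k))]
                exact mul_le_mul_of_nonneg_right
                  (hSb (k + 1) (le_trans hk.1 (Nat.le_succ k)) hk.2)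
                  (sub_nonneg.2 (hmono k))
        · rw [abs_mul, abs_of_nonneg (hu0 n)]
          exact mul_le_mul_of_nonneg_right (hSb n hmn le_rfl) (hu0 n)
    _ = ε * (u m - u n) + ε * u n := by rw [← Finset.mul_sum, tel n hmn]
    _ = ε * u m := by ring
    _ ≤ ε := by nlinarith [hu1 m, hu0 m]

-- simplified Derman–Sacks
private lemma ds_simple (a c δ ξ : ℕ → ℝ)
    (hc0 : ∀ n, 0 ≤ c n) (hξ0 : ∀ n, 0 ≤ ξ n)
    (ha : Tendsto a atTop (𝓝 0))
    (hc : Tendsto (fun N => ∑ k ∈ Finset.range N, c k) atTop atTop)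
    (hδ : ∀ ε > 0, ∃ N : ℕ, ∀ m n : ℕ, N ≤ m → m ≤ n → |∑ k ∈ Finset.Ico m n, δ k| ≤ ε)
    (N₀ : ℕ) (hrec : ∀ n ≥ N₀, ξ (n + 1) ≤ max (a n) (ξ n + δ n - c n)) :
    Tendsto ξ atTop (𝓝 0) := by
  have main : ∀ e > (0:ℝ), ∃ N : ℕ, ∀ n ≥ N, ξ n ≤ 2 * e := by
    intro e he
    obtain ⟨N₁, hN₁⟩ := (Metric.tendsto_atTop.1 ha) e he
    have hN₁' : ∀ n ≥ N₁, a n ≤ e := by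
      intro n hn
      have := hN₁ n hn
      rw [Real.dist_eq, sub_zero] at this
      exact (le_abs_self _).trans this.le
    obtain ⟨N₂, hN₂⟩ := hδ e he
    set M := max N₀ (max N₁ N₂) with hM
    have hMN₀ : N₀ ≤ M := le_max_left _ _
    have hMN₁ : N₁ ≤ M := (le_max_left _ _).trans (le_max_right _ _)
    have hMN₂ : N₂ ≤ M := (le_max_right _ _).trans (le_max_right _ _)
    -- find n₀ ≥ M with ξ (n₀+1) ≤ e
    have exists_small : ∃ n₀ ≥ M, ξ (n₀ + 1) ≤ e := by
      by_contra hcon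
      push_neg at hcon
      have step : ∀ n ≥ M, ξ (n + 1) ≤ ξ n + δ n - c n := by
        intro n hn
        have h1 := hrec n (hMN₀.trans hn)
        have h2 : a n ≤ e := hN₁' n (hMN₁.trans hn)
        have h3 : e < ξ (n + 1) := hcon n hn
        rcases max_cases (a n) (ξ n + δ n - c n) with ⟨hmax, _⟩ | ⟨hmax, _⟩
        · exact absurd (h1.trans (hmax.le.trans h2)) (not_le.2 h3)
        · rwa [hmax] at h1
      have iter : ∀ j : ℕ, ξ (M + j) ≤ ξ M + ∑ k ∈ Finset.Ico M (M + j), (δ k - c k) := by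
        intro j
        induction j with
        | zero => simp
        | succ j ih =>
            have hrec' := step (M + j) (Nat.le_add_right _ _)
            have : M + (j + 1) = (M + j) + 1 := by ring
            rw [this, Finset.sum_Ico_succ_top (Nat.le_add_right _ _)]
            linarith
      -- contradiction with Σ c → ∞
      obtain ⟨K, hK⟩ := Filter.eventually_atTop.1
        ((tendsto_atTop.1 hc) (ξ M + e + ∑ k ∈ Finset.range M, c k + 1))
      set n := max K M with hn
      have hnM : M ≤ n := le_max_right _ _
      have hsum := iter (n - M)
      rw [Nat.add_sub_cancel' hnM] at hsum
      have hδb : |∑ k ∈ Finset.Ico M n, δ k| ≤ e := hN₂ M n hMN₂ hnM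
      have hcsum : ∑ k ∈ Finset.Ico M n, c k
          = (∑ k ∈ Finset.range n, c k) - ∑ k ∈ Finset.range M, c k :=
        Finset.sum_Ico_eq_sub _ hnM
      have hsplit : ∑ k ∈ Finset.Ico M n, (δ k - c k)
          = (∑ k ∈ Finset.Ico M n, δ k) - ∑ k ∈ Finset.Ico M n, c k :=
        Finset.sum_sub_distrib _ _
      have hcK := hK n (le_max_left _ _)
      have h0 := hξ0 n
      have habs : ∑ k ∈ Finset.Ico M n, δ k ≤ e := (le_abs_self _).trans hδb
      rw [hsplit, hcsum] at hsum
      linarith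
    obtain ⟨n₀, hn₀M, hn₀⟩ := exists_small
    -- inductive bound after n₀
    have bound : ∀ j : ℕ, ∃ m : ℕ, n₀ + 1 ≤ m ∧ m ≤ n₀ + 1 + j ∧
        ξ (n₀ + 1 + j) ≤ e + ∑ k ∈ Finset.Ico m (n₀ + 1 + j), δ k := by
      intro j
      induction j with
      | zero => exact ⟨n₀ + 1, le_refl _, by simp, by simpa using hn₀⟩
      | succ j ih =>
          obtain ⟨m, hm1, hm2, hm3⟩ := ih
          have hrec' := hrec (n₀ + 1 + j) (by omega)
          have heq : n₀ + 1 + (j + 1) = (n₀ + 1 + j) + 1 := by ring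
          rcases max_cases (a (n₀ + 1 + j)) (ξ (n₀ + 1 + j) + δ (n₀ + 1 + j) - c (n₀ + 1 + j))
            with ⟨hmax, _⟩ | ⟨hmax, _⟩
          · refine ⟨n₀ + 1 + (j + 1), by omega, le_refl _, ?_⟩
            rw [heq] at *
            rw [hmax] at hrec'
            have : a (n₀ + 1 + j) ≤ e := hN₁' _ (by omega)
            simpa using hrec'.trans this
          · refine ⟨m, hm1, by omega, ?_⟩
            rw [hmax] at hrec'
            rw [heq, Finset.sum_Ico_succ_top hm2]
            have := hc0 (n₀ + 1 + j)
            linarith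
    refine ⟨n₀ + 1, fun n hn => ?_⟩
    obtain ⟨m, hm1, hm2, hm3⟩ := bound (n - (n₀ + 1))
    rw [Nat.add_sub_cancel' hn] at hm3 hm2
    have hδb : |∑ k ∈ Finset.Ico m n, δ k| ≤ e := hN₂ m n (by omega) hm2
    have : ∑ k ∈ Finset.Ico m n, δ k ≤ e := (le_abs_self _).trans hδb
    linarith
  rw [Metric.tendsto_atTop]
  intro ε hε
  obtain ⟨N, hN⟩ := main (ε / 3) (by linarith)
  refine ⟨N, fun n hn => ?_⟩
  rw [Real.dist_eq, sub_zero, abs_of_nonneg (hξ0 n)]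
  have := hN n hn
  linarith

theorem derman_sacks_lemma
    (a b c δ ξ : ℕ → ℝ)
    (ha0 : ∀ n, 0 ≤ a n) (hb0 : ∀ n, 0 ≤ b n) (hc0 : ∀ n, 0 ≤ c n) (hξ0 : ∀ n, 0 ≤ ξ n)
    (ha : Tendsto a atTop (𝓝 0))
    (hb : Summable b)
    (hc : Tendsto (fun N => ∑ k ∈ Finset.range N, c k) atTop atTop)
    (hδ : ∃ l : ℝ, Tendsto (fun N => ∑ k ∈ Finset.range N, δ k) atTop (𝓝 l))
    (N₀ : ℕ) (hrec : ∀ n ≥ N₀, ξ (n + 1) ≤ max (a n) ((1 + b n) * ξ n + δ n - c n)) :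
    Tendsto ξ atTop (𝓝 0) := by
  set P : ℕ → ℝ := fun n => ∏ k ∈ Finset.range n, (1 + b k) with hP
  have hP1 : ∀ n, 1 ≤ P n := by
    intro n
    induction n with
    | zero => simp [hP]
    | succ n ih =>
        have : P (n + 1) = P n * (1 + b n) := Finset.prod_range_succ _ _
        rw [this]
        nlinarith [hb0 n]
  have hPpos : ∀ n, 0 < P n := fun n => lt_of_lt_of_le one_pos (hP1 n)
  have hPsucc : ∀ n, P (n + 1) = P n * (1 + b n) := fun n => Finset.prod_range_succ _ _
  have hPmono : ∀ n, P n ≤ P (n + 1) := by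
    intro n
    rw [hPsucc n]
    nlinarith [hPpos n, hb0 n]
  set B : ℝ := Real.exp (∑' k, b k) with hB
  have hPB : ∀ n, P n ≤ B := by
    intro n
    calc P n ≤ ∏ k ∈ Finset.range n, Real.exp (b k) := by
          refine Finset.prod_le_prod (fun k _ => by linarith [hb0 k]) fun k _ => ?_
          have := Real.add_one_le_exp (b k)
          linarith
      _ = Real.exp (∑ k ∈ Finset.range n, b k) := (Real.exp_sum _ _).symm
      _ ≤ B := Real.exp_le_exp.2 (Summable.sum_le_tsum _ (fun k _ => hb0 k) hb)
  have hBpos : 0 < B := lt_of_lt_of_le one_pos ((hP1 0).trans (hPB 0))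
  set u : ℕ → ℝ := fun n => (P (n + 1))⁻¹ with hu
  set η : ℕ → ℝ := fun n => ξ n / P n with hη
  set δ' : ℕ → ℝ := fun n => δ n * u n with hδ'def
  set c' : ℕ → ℝ := fun n => c n / P (n + 1) with hc'def
  have hη0 : ∀ n, 0 ≤ η n := fun n => div_nonneg (hξ0 n) (hPpos n).le
  have hc'0 : ∀ n, 0 ≤ c' n := fun n => div_nonneg (hc0 n) (hPpos _).le
  -- transformed recursion
  have hrec' : ∀ n ≥ N₀, η (n + 1) ≤ max (a n) (η n + δ' n - c' n) := by
    intro n hn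
    have h1 := hrec n hn
    have hp : 0 < P (n + 1) := hPpos _
    have h2 : η (n + 1) ≤ max (a n / P (n + 1))
        (((1 + b n) * ξ n + δ n - c n) / P (n + 1)) := by
      rw [max_div_div_right hp.le]
      exact (div_le_div_iff_of_pos_right hp).2 h1
    refine h2.trans (max_le_max ?_ ?_)
    · exact div_le_self (ha0 n) (hP1 _)
    · have hbn : (0:ℝ) < 1 + b n := by linarith [hb0 n]
      have hkey : ((1 + b n) * ξ n + δ n - c n) / P (n + 1)
          = η n + δ' n - c' n := by
        simp only [hη, hδ'def, hc'def, hu, hPsucc n]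
        have hpn : (0:ℝ) < P n := hPpos n
        field_simp
      rw [hkey]
  -- hypotheses for ds_simple
  have hc' : Tendsto (fun N => ∑ k ∈ Finset.range N, c' k) atTop atTop := by
    have hcomp : ∀ N, (∑ k ∈ Finset.range N, c k) / B ≤ ∑ k ∈ Finset.range N, c' k := by
      intro N
      rw [Finset.sum_div]
      refine Finset.sum_le_sum fun k _ => ?_
      rw [div_le_div_iff₀ hBpos (hPpos (k + 1))]
      nlinarith [hc0 k, hPB (k + 1), hPpos (k + 1)]
    have hdiv : Tendsto (fun N => (∑ k ∈ Finset.range N, c k) / B) atTop atTop :=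
      Tendsto.atTop_div_const hBpos hc
    exact tendsto_atTop_mono hcomp hdiv
  have hu0 : ∀ n, 0 ≤ u n := fun n => inv_nonneg.2 (hPpos _).le
  have hu1 : ∀ n, u n ≤ 1 := fun n => inv_le_one_of_one_le₀ (hP1 _)
  have humono : ∀ n, u (n + 1) ≤ u n := by
    intro n
    exact inv_anti₀ (hPpos _) (hPmono _)
  have hδ'c := abel_cauchy δ u hu0 hu1 humono (cauchy_ico δ hδ)
  have hηlim : Tendsto η atTop (𝓝 0) :=
    ds_simple a c' δ' η hc'0 hη0 ha hc' hδ'c N₀ hrec'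
  have hle : ∀ n, ξ n ≤ B * η n := by
    intro n
    have : ξ n = η n * P n := (div_mul_cancel₀ (ξ n) (hPpos n).ne').symm
    rw [this, mul_comm B (η n)]
    exact mul_le_mul_of_nonneg_left (hPB n) (hη0 n)
  have hBη : Tendsto (fun n => B * η n) atTop (𝓝 0) := by
    simpa using hηlim.const_mul B
  exact squeeze_zero hξ0 hle hBη
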